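/- Suppose that a finitely generated group G has Property (τ) with respect to a collection 𝒞 of finite index normal subgroups. Then there is a constant c > 1 with the following property: if J is a member of 𝒞 and J is contained in a normal subgroup H of G such that H/J is abelian, then |H/J| < c^{[G : H]}. -/

import Mathlib

namespace LWaux

/-- The "interval" condition on `ZMod d`. -/
def Cnd (d : ℕ) (x : ZMod d) : Prop := 1 ≤ x.val ∧ x.val ≤ d / 2

instance (d : ℕ) (x : ZMod d) : Decidable (Cnd d x) := by unfold Cnd; infer_instance

instance (a b : Prop) [Decidable a] [Decidable b] : Decidable (Xor' a b) := by unfold Xor'; infer_instance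

lemma xor_elim {a b c : Prop} (h : Xor' a c) : Xor' a b ∨ Xor' b c := by
  rcases h with ⟨ha, hc⟩ | ⟨hc, ha⟩ <;> by_cases hb : b <;> simp [Xor', *]

lemma xor_symm {a b : Prop} (h : Xor' a b) : Xor' b a := by
  rcases h with ⟨ha, hb⟩ | ⟨hb, ha⟩
  · exact Or.inr ⟨ha, hb⟩
  · exact Or.inl ⟨hb, ha⟩

lemma unit_card (d : ℕ) (hd : 2 ≤ d) [NeZero d] :
    (Finset.univ.filter fun x : ZMod d => Xor' (Cnd d x) (Cnd d (x + 1))).card ≤ 3 := by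
  haveI : Fact (1 < d) := ⟨by omega⟩
  have hsub : (Finset.univ.filter fun x : ZMod d => Xor' (Cnd d x) (Cnd d (x + 1)))
      ⊆ {(0 : ZMod d), ((d/2 : ℕ) : ZMod d), ((d-1 : ℕ) : ZMod d)} := by
    intro y hy
    rw [Finset.mem_filter] at hy
    have hy' := hy.2
    have hvlt : y.val < d := ZMod.val_lt y
    have hone : (1 : ZMod d).val = 1 := ZMod.val_one d
    have hval' : (y + 1).val = (y.val + 1) % d := by
      rw [ZMod.val_add, hone]
    have hkey : y.val = 0 ∨ y.val = d / 2 ∨ y.val = d - 1 := by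
      rcases Nat.lt_or_ge (y.val + 1) d with hlt | hge
      · rw [Nat.mod_eq_of_lt hlt] at hval'
        rcases hy' with ⟨⟨h1, h2⟩, h3⟩ | ⟨⟨h1, h2⟩, h3⟩
        · rw [Cnd, hval'] at h3; omega
        · rw [Cnd, hval'] at *; omega
      · have : y.val + 1 = d := by omega
        rw [this, Nat.mod_self] at hval'
        rcases hy' with ⟨⟨h1, h2⟩, _⟩ | ⟨⟨h1, h2⟩, _⟩
        · omega
        · rw [Cnd, hval'] at *; omega
    have hy2 : ((y.val : ℕ) : ZMod d) = y := ZMod.natCast_rightInverse y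
    simp only [Finset.mem_insert, Finset.mem_singleton]
    rcases hkey with h | h | h
    · left; rw [← hy2, h]; simp
    · right; left; rw [← hy2, h]
    · right; right; rw [← hy2, h]
  refine le_trans (Finset.card_le_card hsub) ?_
  refine le_trans (Finset.card_insert_le _ _) ?_
  have h2 := Finset.card_insert_le ((d/2 : ℕ) : ZMod d) ({((d-1 : ℕ) : ZMod d)} : Finset (ZMod d))
  simp only [Finset.card_singleton] at h2 ⊢
  omega

lemma xor_count_nat (d : ℕ) (hd : 2 ≤ d) [NeZero d] (w : ℕ) :
    Nat.card {x : ZMod d // Xor' (Cnd d x) (Cnd d (x + (w : ZMod d)))} ≤ 3 * w := by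
  rw [Nat.card_eq_fintype_card, Fintype.card_subtype]
  induction w with
  | zero =>
      simp only [Nat.cast_zero, add_zero, mul_zero, Nat.le_zero, Finset.card_eq_zero]
      ext x
      simp [Xor']
  | succ w ih =>
      have hsub : (Finset.univ.filter fun x : ZMod d => Xor' (Cnd d x) (Cnd d (x + ((w+1 : ℕ) : ZMod d))))
          ⊆ (Finset.univ.filter fun x : ZMod d => Xor' (Cnd d x) (Cnd d (x + (w : ZMod d)))) ∪
            (Finset.univ.filter fun x : ZMod d => Xor' (Cnd d (x + (w : ZMod d))) (Cnd d (x + (w : ZMod d) + 1))) := by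
        intro x hx
        rw [Finset.mem_filter] at hx
        have hcast : ((w+1 : ℕ) : ZMod d) = (w : ZMod d) + 1 := by push_cast; ring
        rw [hcast, ← add_assoc] at hx
        rcases xor_elim (b := Cnd d (x + (w : ZMod d))) hx.2 with h | h
        · exact Finset.mem_union_left _ (by simp [h])
        · exact Finset.mem_union_right _ (by simp [h])
      have hshift : (Finset.univ.filter fun x : ZMod d => Xor' (Cnd d (x + (w : ZMod d))) (Cnd d (x + (w : ZMod d) + 1))).card
          ≤ 3 := by
        refine le_trans (Finset.card_le_card_of_injOn (fun x => x + (w : ZMod d)) ?_ ?_) (unit_card d hd)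
        · intro x hx
          rw [Finset.mem_coe, Finset.mem_filter] at hx ⊢
          exact ⟨Finset.mem_univ _, hx.2⟩
        · intro a _ b _ h
          exact add_right_cancel h
      refine le_trans (Finset.card_le_card hsub) ?_
      refine le_trans (Finset.card_union_le _ _) ?_
      have := Nat.add_le_add ih hshift
      omega

lemma xor_count_int (d : ℕ) (hd : 2 ≤ d) [NeZero d] (w : ℤ) :
    Nat.card {x : ZMod d // Xor' (Cnd d x) (Cnd d (x + (w : ZMod d)))} ≤ 3 * w.natAbs := by
  rcases le_or_gt 0 w with hw | hw
  · have hcast : (w : ZMod d) = ((w.natAbs : ℕ) : ZMod d) := by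
      conv_lhs => rw [← Int.natAbs_of_nonneg hw]
      exact Int.cast_natCast _
    rw [hcast]
    exact xor_count_nat d hd w.natAbs
  · have hcast : (w : ZMod d) = -((w.natAbs : ℕ) : ZMod d) := by
      have hw' : w = -((w.natAbs : ℤ)) := by omega
      conv_lhs => rw [hw', Int.cast_neg, Int.cast_natCast]
    have hequiv : {x : ZMod d // Xor' (Cnd d x) (Cnd d (x + (w : ZMod d)))} ≃
        {y : ZMod d // Xor' (Cnd d y) (Cnd d (y + ((w.natAbs : ℕ) : ZMod d)))} := by
      refine Equiv.subtypeEquiv (Equiv.addRight (w : ZMod d)) ?_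
      intro x
      simp only [Equiv.coe_addRight]
      rw [hcast]
      constructor
      · intro h
        rw [add_assoc, neg_add_cancel, add_zero]
        exact xor_symm h
      · intro h
        rw [add_assoc, neg_add_cancel, add_zero] at h
        exact xor_symm h
    rw [Nat.card_congr hequiv]
    exact xor_count_nat d hd w.natAbs



/-- Counting preimages of a predicate under a surjective hom. -/
lemma card_subtype_comp {A B : Type*} [AddGroup A] [AddGroup B] [Finite A]
    (f : A →+ B) (hf : Function.Surjective f) (P : B → Prop) :
    Nat.card {a : A // P (f a)} = Nat.card {x : B // P x} * Nat.card f.ker := by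
  classical
  let F : {a : A // P (f a)} → {x : B // P x} := fun a => ⟨f a.1, a.2⟩
  have e1 := Equiv.sigmaFiberEquiv F
  choose a₀ ha₀ using fun x : {x : B // P x} => hf x.1
  have e2 : ∀ x : {x : B // P x}, {a : {a : A // P (f a)} // F a = x} ≃ f.ker := by
    intro x
    refine ⟨fun p => ⟨p.1.1 - a₀ x, ?_⟩, fun k => ⟨⟨k.1 + a₀ x, ?_⟩, ?_⟩, ?_, ?_⟩
    · have h1 : f p.1.1 = x.1 := congrArg Subtype.val p.2
      have : f (p.1.1 - a₀ x) = 0 := by rw [map_sub, h1, ha₀ x, sub_self]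
      exact AddMonoidHom.mem_ker.mpr this
    · have hk : f k.1 = 0 := AddMonoidHom.mem_ker.mp k.2
      have : f (k.1 + a₀ x) = x.1 := by rw [map_add, ha₀ x, hk, zero_add]
      rw [this]; exact x.2
    · apply Subtype.ext
      have hk : f k.1 = 0 := AddMonoidHom.mem_ker.mp k.2
      show f (k.1 + a₀ x) = x.1
      rw [map_add, ha₀ x, hk, zero_add]
    · intro p
      apply Subtype.ext; apply Subtype.ext
      show p.1.1 - a₀ x + a₀ x = p.1.1
      rw [sub_add_cancel]
    · intro k
      apply Subtype.ext
      show k.1 + a₀ x - a₀ x = k.1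
      rw [add_sub_cancel_right]
  calc Nat.card {a : A // P (f a)}
      = Nat.card (Σ x : {x : B // P x}, {a : {a : A // P (f a)} // F a = x}) :=
        (Nat.card_congr e1).symm
    _ = Nat.card ({x : B // P x} × f.ker) :=
        Nat.card_congr ((Equiv.sigmaCongrRight e2).trans (Equiv.sigmaEquivProd _ _))
    _ = Nat.card {x : B // P x} * Nat.card f.ker := Nat.card_prod _ _

lemma card_eq_of_surj {A B : Type*} [AddGroup A] [AddGroup B] [Finite A]
    (f : A →+ B) (hf : Function.Surjective f) :
    Nat.card A = Nat.card B * Nat.card f.ker := by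
  have h := card_subtype_comp f hf (fun _ => True)
  rwa [Nat.card_congr (Equiv.subtypeUnivEquiv (fun _ => trivial)),
    Nat.card_congr (Equiv.subtypeUnivEquiv (fun _ => trivial))] at h

/-- The embedding `ZMod n →+ ZMod m` (multiplication by `m/n`) when `n ∣ m`. -/
noncomputable def zmodEmbHom (n m : ℕ) (h : n ∣ m) : ZMod n →+ ZMod m :=
  ZMod.lift n ⟨(AddMonoidHom.mulRight ((m / n : ℕ) : ZMod m)).comp (Int.castAddHom (ZMod m)), by
    show ((n : ℤ) : ZMod m) * ((m / n : ℕ) : ZMod m) = 0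
    rw [Int.cast_natCast, ← Nat.cast_mul, Nat.mul_div_cancel' h, ZMod.natCast_self]⟩

lemma zmodEmbHom_apply (n m : ℕ) (h : n ∣ m) [NeZero n] (a : ZMod n) :
    zmodEmbHom n m h a = ((a.val * (m / n) : ℕ) : ZMod m) := by
  have ha : (((a.val : ℤ) : ZMod n)) = a := by
    rw [Int.cast_natCast]; exact ZMod.natCast_rightInverse a
  conv_lhs => rw [← ha]
  rw [zmodEmbHom, ZMod.lift_coe]
  show ((a.val : ℤ) : ZMod m) * ((m / n : ℕ) : ZMod m) = _
  rw [Int.cast_natCast, ← Nat.cast_mul]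

lemma zmodEmbHom_injective (n m : ℕ) (h : n ∣ m) [NeZero n] (hm : m ≠ 0) :
    Function.Injective (zmodEmbHom n m h) := by
  have hn0 : n ≠ 0 := NeZero.ne n
  have hq : 1 ≤ m / n := Nat.one_le_div_iff (Nat.pos_of_ne_zero hn0) |>.mpr (Nat.le_of_dvd (Nat.pos_of_ne_zero hm) h)
  intro a b hab
  rw [zmodEmbHom_apply n m h, zmodEmbHom_apply n m h] at hab
  have hlt : ∀ c : ZMod n, c.val * (m / n) < m := by
    intro c
    have hc : c.val < n := ZMod.val_lt c
    calc c.val * (m / n) < n * (m / n) := by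
          have h2 : 0 < m / n := hq
          exact Nat.mul_lt_mul_of_lt_of_le hc (le_refl _) h2
      _ = m := Nat.mul_div_cancel' h
  have := congrArg ZMod.val hab
  rw [ZMod.val_cast_of_lt (hlt a), ZMod.val_cast_of_lt (hlt b)] at this
  have : a.val = b.val := Nat.eq_of_mul_eq_mul_right (by omega) this
  exact ZMod.val_injective n this

/-- A finite abelian group has at least `|A|` homomorphisms into `ZMod |A|`. -/
lemma card_le_card_addHom_zmod (A : Type*) [AddCommGroup A] [Finite A] :
    Nat.card A ≤ Nat.card (A →+ ZMod (Nat.card A)) := by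
  classical
  obtain ⟨ι, hι, n, hn, ⟨e⟩⟩ := AddCommGroup.equiv_directSum_zmod_of_finite' A
  haveI := hι
  set m := Nat.card A with hmdef
  let eA : A ≃+ ((i : ι) → ZMod (n i)) := e.trans (DirectSum.addEquivProd _)
  have hm : m = ∏ i, n i := by
    rw [hmdef, Nat.card_congr eA.toEquiv, Nat.card_pi]
    simp [Nat.card_zmod]
  have hdvd : ∀ i, n i ∣ m := fun i => hm ▸ Finset.dvd_prod_of_mem n (Finset.mem_univ i)
  haveI : ∀ i, NeZero (n i) := fun i => ⟨by have := hn i; omega⟩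
  have hm0 : m ≠ 0 := Nat.card_pos.ne'
  let Θ : ((i : ι) → ZMod (n i)) → (((i : ι) → ZMod (n i)) →+ ZMod m) :=
    fun v => ∑ i, (zmodEmbHom (n i) m (hdvd i)).comp
      ((AddMonoidHom.mulRight (v i)).comp (Pi.evalAddMonoidHom (fun i => ZMod (n i)) i))
  have hΘval : ∀ v j, Θ v (Pi.single j 1) = zmodEmbHom (n j) m (hdvd j) (v j) := by
    intro v j
    show (∑ i, (zmodEmbHom (n i) m (hdvd i)).comp
      ((AddMonoidHom.mulRight (v i)).comp (Pi.evalAddMonoidHom (fun i => ZMod (n i)) i)))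
        (Pi.single j 1) = _
    rw [AddMonoidHom.finset_sum_apply]
    rw [Finset.sum_eq_single j]
    · simp
    · intro i _ hij
      have h0 : (Pi.single j (1 : ZMod (n j)) : ∀ i, ZMod (n i)) i = 0 :=
        Pi.single_eq_of_ne hij 1
      simp [h0]
    · intro hj; exact absurd (Finset.mem_univ j) hj
  have hΘinj : Function.Injective Θ := by
    intro v v' hvv
    funext j
    have h1 := congrArg (fun f => f (Pi.single j 1)) hvv
    simp only [hΘval] at h1
    exact zmodEmbHom_injective (n j) m (hdvd j) hm0 h1
  let Φ : ((i : ι) → ZMod (n i)) → (A →+ ZMod m) := fun v => (Θ v).comp eA.toAddMonoidHom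
  have hΦinj : Function.Injective Φ := by
    intro v v' h
    apply hΘinj
    refine AddMonoidHom.ext fun x => ?_
    obtain ⟨a, rfl⟩ := eA.surjective x
    exact DFunLike.congr_fun h a
  haveI : NeZero m := ⟨hm0⟩
  haveI : Finite (A →+ ZMod m) :=
    Finite.of_injective (fun f => (f : A → ZMod m)) DFunLike.coe_injective
  calc m = Nat.card ((i : ι) → ZMod (n i)) := by
        rw [Nat.card_pi]; simp [Nat.card_zmod, hm]
    _ ≤ Nat.card (A →+ ZMod m) := Nat.card_le_card_of_injective Φ hΦinj


lemma xor_iff_congr {a a' b b' : Prop} (h1 : a ↔ a') (h2 : b ↔ b') :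
    Xor' a b ↔ Xor' a' b' := by
  unfold Xor'; rw [h1, h2]

/-- The heart of the Lubotzky–Weiss argument: in a finite group `Q` with a
"large" abelian normal subgroup `A`, there is a Følner-type set `Y`. -/
lemma core {Q : Type*} [Group Q] [Finite Q] {S' : Type*} [Finite S'] (σ : S' → Q)
    (A : Subgroup Q) [hAn : A.Normal]
    (hcomm : ∀ x y : ↥A, x * y = y * x)
    (K : ℕ) (hK : 0 < K)
    (hbig : K ^ (Nat.card (Q ⧸ A) * Nat.card S') < Nat.card ↥A) :
    ∃ Y : Set Q, 0 < Nat.card Y ∧ 2 * Nat.card Y ≤ Nat.card Q ∧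
      K * Nat.card {e : Q × S' // Xor' (e.1 ∈ Y) (e.1 * σ e.2 ∈ Y)}
        ≤ 9 * Nat.card S' * Nat.card Y := by
  classical
  letI : CommGroup ↥A := { (inferInstance : Group ↥A) with mul_comm := hcomm }
  set m := Nat.card ↥A with hmdef
  have hm2 : 2 ≤ m := by
    have h1 : 1 ≤ K ^ (Nat.card (Q ⧸ A) * Nat.card S') := Nat.one_le_pow _ _ hK
    omega
  haveI : NeZero m := ⟨by omega⟩
  set π := QuotientGroup.mk' A with hπdef
  have hout : ∀ j : Q ⧸ A, π (Quotient.out j) = j := fun j => QuotientGroup.out_eq' j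
  have hαmem : ∀ q : Q, q * (Quotient.out (π q))⁻¹ ∈ A := by
    intro q
    rw [← QuotientGroup.eq_one_iff]
    have : (QuotientGroup.mk (q * (Quotient.out (π q))⁻¹) : Q ⧸ A)
        = π q * (π (Quotient.out (π q)))⁻¹ := by
      rw [hπdef]; simp [QuotientGroup.mk'_apply]
    rw [this, hout, mul_inv_cancel]
  set α : Q → ↥A := fun q => ⟨q * (Quotient.out (π q))⁻¹, hαmem q⟩ with hαdef
  have hdecomp : ∀ q : Q, ((α q : Q)) * Quotient.out (π q) = q := by
    intro q; show q * (Quotient.out (π q))⁻¹ * Quotient.out (π q) = q; group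
  have hπA : ∀ (a : ↥A) (j : Q ⧸ A), π ((a : Q) * Quotient.out j) = j := by
    intro a j
    rw [map_mul, hout]
    have : π (a : Q) = 1 := by
      rw [hπdef, QuotientGroup.mk'_apply, QuotientGroup.eq_one_iff]; exact a.2
    rw [this, one_mul]
  have hαA : ∀ (a : ↥A) (j : Q ⧸ A), α ((a : Q) * Quotient.out j) = a := by
    intro a j
    apply Subtype.ext
    show (a : Q) * Quotient.out j * (Quotient.out (π ((a : Q) * Quotient.out j)))⁻¹ = a
    rw [hπA]; group
  set h : (Q ⧸ A) × S' → ↥A := fun p => α (Quotient.out p.1 * σ p.2) with hhdef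
  have hrel : ∀ (q : Q) (s : S'), α (q * σ s) = α q * h (π q, s) := by
    intro q s
    apply Subtype.ext
    show q * σ s * (Quotient.out (π (q * σ s)))⁻¹
      = (q * (Quotient.out (π q))⁻¹) *
        (Quotient.out (π q) * σ s * (Quotient.out (π (Quotient.out (π q) * σ s)))⁻¹)
    have hq : π (Quotient.out (π q) * σ s) = π (q * σ s) := by
      rw [map_mul, map_mul, hout]
    rw [hq]; group
  -- characters
  have hma : Nat.card (Additive ↥A) = m := Nat.card_congr Additive.toMul
  have hX : m ≤ Nat.card (Additive ↥A →+ ZMod m) := by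
    have h0 := card_le_card_addHom_zmod (Additive ↥A)
    rw [hma] at h0
    exact h0
  -- pigeonhole
  set k := Nat.card (Q ⧸ A) * Nat.card S' with hkdef
  haveI : Finite (Additive ↥A →+ ZMod m) :=
    Finite.of_injective (fun f => (f : Additive ↥A → ZMod m)) DFunLike.coe_injective
  letI : Fintype (Additive ↥A →+ ZMod m) := Fintype.ofFinite _
  letI : Fintype (Q ⧸ A) := Fintype.ofFinite _
  letI : Fintype S' := Fintype.ofFinite _
  have hF : ∀ (χ : Additive ↥A →+ ZMod m) (p : (Q ⧸ A) × S'),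
      (χ (Additive.ofMul (h p))).val * K / m < K := by
    intro χ p
    rw [Nat.div_lt_iff_lt_mul (by omega : 0 < m)]
    have := ZMod.val_lt (χ (Additive.ofMul (h p)))
    calc (χ (Additive.ofMul (h p))).val * K < m * K := by
          exact Nat.mul_lt_mul_of_lt_of_le this (le_refl K) hK
      _ = K * m := Nat.mul_comm _ _
  set F : (Additive ↥A →+ ZMod m) → (((Q ⧸ A) × S') → Fin K) :=
    fun χ p => ⟨(χ (Additive.ofMul (h p))).val * K / m, hF χ p⟩ with hFdef
  have hcard2 : Fintype.card (((Q ⧸ A) × S') → Fin K)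
      < Fintype.card (Additive ↥A →+ ZMod m) := by
    rw [Fintype.card_fun]
    have h1 : Fintype.card ((Q ⧸ A) × S') = k := by
      rw [Fintype.card_prod, hkdef, Nat.card_eq_fintype_card, Nat.card_eq_fintype_card]
    rw [h1, Fintype.card_fin]
    calc K ^ k < m := hbig
      _ ≤ Nat.card (Additive ↥A →+ ZMod m) := hX
      _ = Fintype.card _ := Nat.card_eq_fintype_card
  obtain ⟨χ₁, χ₂, hne, hFeq⟩ := Fintype.exists_ne_map_eq_of_card_lt F hcard2
  set ψ := χ₁ - χ₂ with hψdef
  have hψ0 : ψ ≠ 0 := sub_ne_zero_of_ne hne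
  have hw : ∀ p : (Q ⧸ A) × S', ∃ w : ℤ,
      ψ (Additive.ofMul (h p)) = ((w : ℤ) : ZMod m) ∧ K * w.natAbs < m := by
    intro p
    set v₁ := (χ₁ (Additive.ofMul (h p))).val with hv₁
    set v₂ := (χ₂ (Additive.ofMul (h p))).val with hv₂
    have hbucket : v₁ * K / m = v₂ * K / m := by
      have := congrFun hFeq p
      rw [hFdef] at this
      exact congrArg Fin.val this
    refine ⟨(v₁ : ℤ) - v₂, ?_, ?_⟩
    · rw [hψdef, AddMonoidHom.sub_apply]
      have e1 : ((v₁ : ℕ) : ZMod m) = χ₁ (Additive.ofMul (h p)) := ZMod.natCast_rightInverse _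
      have e2 : ((v₂ : ℕ) : ZMod m) = χ₂ (Additive.ofMul (h p)) := ZMod.natCast_rightInverse _
      rw [← e1, ← e2]
      push_cast
      ring
    · have e1 := Nat.div_add_mod (v₁ * K) m
      have e2 := Nat.div_add_mod (v₂ * K) m
      have r1 := Nat.mod_lt (v₁ * K) (show 0 < m by omega)
      have r2 := Nat.mod_lt (v₂ * K) (show 0 < m by omega)
      rw [hbucket] at e1
      rcases le_or_gt v₂ v₁ with hc | hc
      · have hna : ((v₁ : ℤ) - v₂).natAbs = v₁ - v₂ := by omega
        rw [hna]
        have hmul : K * (v₁ - v₂) = v₁ * K - v₂ * K := by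
          rw [Nat.mul_comm, Nat.sub_mul]
        omega
      · have hna : ((v₁ : ℤ) - v₂).natAbs = v₂ - v₁ := by omega
        rw [hna]
        have hmul : K * (v₂ - v₁) = v₂ * K - v₁ * K := by
          rw [Nat.mul_comm, Nat.sub_mul]
        omega
  -- the range of ψ
  set R := ψ.range with hRdef
  set d := Nat.card R with hddef
  have hdne : R ≠ ⊥ := by
    intro hbot
    apply hψ0
    ext a
    have : ψ (Additive.ofMul a) ∈ R := ⟨_, rfl⟩
    rw [hbot] at this
    simpa using this
  have hd2 : 2 ≤ d := (AddSubgroup.one_lt_card_iff_ne_bot R).mpr hdne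
  haveI : NeZero d := ⟨by omega⟩
  have hddvd : d ∣ m := by
    have h0 : Nat.card ↥R ∣ Nat.card (ZMod m) := AddSubgroup.card_addSubgroup_dvd_card R
    rwa [Nat.card_zmod] at h0
  set g := m / d with hgdef
  have hmgd : g * d = m := Nat.div_mul_cancel hddvd
  have hg1 : 1 ≤ g := by
    rcases Nat.eq_zero_or_pos g with h0 | h1
    · rw [h0] at hmgd; omega
    · exact h1
  have hvals : ∀ y : R, g ∣ (y : ZMod m).val := by
    intro y
    have hy0 : d • y = (0 : R) := card_nsmul_eq_zero'
    have hy1 : d • ((y : ZMod m)) = 0 := by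
      have := congrArg (fun z : R => (z : ZMod m)) hy0
      simpa using this
    have hy2 : ((d * (y : ZMod m).val : ℕ) : ZMod m) = 0 := by
      rw [Nat.cast_mul]
      rw [ZMod.natCast_rightInverse (y : ZMod m)]
      rw [← nsmul_eq_mul]
      exact hy1
    have hy3 : m ∣ d * (y : ZMod m).val := (ZMod.natCast_eq_zero_iff _ _).mp hy2
    obtain ⟨c, hc⟩ := hy3
    refine ⟨c, ?_⟩
    have : d * (y : ZMod m).val = d * (g * c) := by
      rw [hc, ← hmgd]; ring
    exact Nat.eq_of_mul_eq_mul_left (by omega) this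
  set jval : R → ℕ := fun y => (y : ZMod m).val / g with hjdef
  have hjmul : ∀ y : R, g * jval y = (y : ZMod m).val := by
    intro y
    rw [hjdef]
    exact Nat.mul_div_cancel' (hvals y)
  have hjlt : ∀ y : R, jval y < d := by
    intro y
    have h1 : (y : ZMod m).val < m := ZMod.val_lt _
    have h2 := hjmul y
    by_contra hcon
    push_neg at hcon
    have : g * d ≤ g * jval y := Nat.mul_le_mul_left g hcon
    omega
  have hι'add : ∀ y z : R, ((jval (y + z) : ℕ) : ZMod d) = ((jval y : ℕ) : ZMod d) + ((jval z : ℕ) : ZMod d) := by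
    intro y z
    have h1 : ((y + z : R) : ZMod m).val = ((y : ZMod m).val + (z : ZMod m).val) % m := by
      rw [AddSubgroup.coe_add, ZMod.val_add]
    have h2 : jval (y + z) = (jval y + jval z) % d := by
      have h3 : (y : ZMod m).val + (z : ZMod m).val = g * (jval y + jval z) := by
        rw [← hjmul y, ← hjmul z]; ring
      rw [hjdef]
      show ((y + z : R) : ZMod m).val / g = (jval y + jval z) % d
      rw [h1, h3, ← hmgd, Nat.mul_mod_mul_left]
      exact Nat.mul_div_cancel_left _ (by omega)
    rw [h2, ZMod.natCast_mod, Nat.cast_add]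
  set ι : R →+ ZMod d := AddMonoidHom.mk' (fun y => ((jval y : ℕ) : ZMod d)) hι'add with hιdef
  have hιinj : Function.Injective ι := by
    intro y z hyz
    have h1 : ((jval y : ℕ) : ZMod d) = ((jval z : ℕ) : ZMod d) := hyz
    have h2 : jval y = jval z := by
      have := congrArg ZMod.val h1
      rwa [ZMod.val_cast_of_lt (hjlt y), ZMod.val_cast_of_lt (hjlt z)] at this
    apply Subtype.ext
    apply ZMod.val_injective
    rw [← hjmul y, ← hjmul z, h2]
  have hιsurj : Function.Surjective ι := by
    have := (Nat.bijective_iff_injective_and_card ι).mpr ⟨hιinj, by rw [Nat.card_zmod]⟩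
    exact this.surjective
  set Ψ : Additive ↥A →+ ZMod d := ι.comp ψ.rangeRestrict with hΨdef
  have hΨsurj : Function.Surjective Ψ :=
    hιsurj.comp (AddMonoidHom.rangeRestrict_surjective ψ)
  have hΨh : ∀ p : (Q ⧸ A) × S', ∃ u : ℤ,
      Ψ (Additive.ofMul (h p)) = ((u : ℤ) : ZMod d) ∧ K * u.natAbs ≤ d := by
    intro p
    obtain ⟨w, hw1, hw2⟩ := hw p
    set y : R := ψ.rangeRestrict (Additive.ofMul (h p)) with hydef
    have hyv : (y : ZMod m) = ψ (Additive.ofMul (h p)) := rfl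
    have hΨy : Ψ (Additive.ofMul (h p)) = ι y := rfl
    rcases le_or_gt 0 w with hwnn | hwneg
    · have hcast : (y : ZMod m) = ((w.natAbs : ℕ) : ZMod m) := by
        rw [hyv, hw1]
        conv_lhs => rw [← Int.natAbs_of_nonneg hwnn]
        rw [Int.cast_natCast]
      have hvlt : w.natAbs < m := by
        have : w.natAbs ≤ K * w.natAbs := Nat.le_mul_of_pos_left _ hK
        omega
      have hval : (y : ZMod m).val = w.natAbs := by
        rw [hcast, ZMod.val_cast_of_lt hvlt]
      refine ⟨(jval y : ℤ), ?_, ?_⟩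
      · rw [hΨy, Int.cast_natCast]; rfl
      · have h1 : g * (K * jval y) = K * w.natAbs := by
          rw [← hval, ← hjmul y]; ring
        have h2 : g * (K * jval y) < g * d := by omega
        have := Nat.lt_of_mul_lt_mul_left h2
        rw [Int.natAbs_natCast]
        omega
    · set z := -y with hzdef
      have hcast : (z : ZMod m) = ((w.natAbs : ℕ) : ZMod m) := by
        have hz : (z : ZMod m) = -(y : ZMod m) := rfl
        rw [hz, hyv, hw1]
        have hw' : w = -((w.natAbs : ℤ)) := by omega
        conv_lhs => rw [hw', Int.cast_neg, Int.cast_natCast, neg_neg]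
      have hvlt : w.natAbs < m := by
        have : w.natAbs ≤ K * w.natAbs := Nat.le_mul_of_pos_left _ hK
        omega
      have hval : (z : ZMod m).val = w.natAbs := by
        rw [hcast, ZMod.val_cast_of_lt hvlt]
      refine ⟨-(jval z : ℤ), ?_, ?_⟩
      · have hyz : y = -z := by rw [hzdef, neg_neg]
        rw [hΨy, hyz, map_neg]
        have : ι z = ((jval z : ℕ) : ZMod d) := rfl
        rw [this, Int.cast_neg, Int.cast_natCast]
      · have h1 : g * (K * jval z) = K * w.natAbs := by
          rw [← hval, ← hjmul z]; ring
        have h2 : g * (K * jval z) < g * d := by omega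
        have := Nat.lt_of_mul_lt_mul_left h2
        rw [Int.natAbs_neg, Int.natAbs_natCast]
        omega
  -- the set Y
  set Ψ' : ↥A → ZMod d := fun a => Ψ (Additive.ofMul a) with hΨ'def
  have hΨ'mul : ∀ a b : ↥A, Ψ' (a * b) = Ψ' a + Ψ' b := by
    intro a b
    show Ψ (Additive.ofMul (a * b)) = _
    rw [ofMul_mul, map_add]
  set Y : Set Q := {q | Cnd d (Ψ' (α q))} with hYdef
  set mker := Nat.card Ψ.ker with hmkerdef
  have hmker1 : 1 ≤ mker := Nat.card_pos
  have hsplit : m = d * mker := by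
    rw [← hma]
    have := card_eq_of_surj Ψ hΨsurj
    rw [Nat.card_zmod] at this
    exact this
  set D := d / 2 with hDdef
  have hD1 : 1 ≤ D := by omega
  -- counting the condition set
  have hcondcount : Nat.card {x : ZMod d // Cnd d x} = D := by
    have e : {x : ZMod d // Cnd d x} ≃ Fin D := by
      refine ⟨fun x => ⟨x.1.val - 1, ?_⟩, fun i => ⟨((i.1 + 1 : ℕ) : ZMod d), ?_⟩, ?_, ?_⟩
      · have := x.2; rw [Cnd] at this; omega
      · have hi : i.1 + 1 < d := by have := i.2; omega
        rw [Cnd, ZMod.val_cast_of_lt hi]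
        have := i.2; omega
      · intro x
        apply Subtype.ext
        have hx := x.2
        rw [Cnd] at hx
        have h1 : x.1.val - 1 + 1 = x.1.val := by omega
        show (((x.1.val - 1 + 1 : ℕ)) : ZMod d) = x.1
        rw [h1]
        exact ZMod.natCast_rightInverse x.1
      · intro i
        apply Fin.ext
        show (((i.1 + 1 : ℕ) : ZMod d)).val - 1 = i.1
        have hi : i.1 + 1 < d := by have := i.2; omega
        rw [ZMod.val_cast_of_lt hi]
        omega
    rw [Nat.card_congr e]
    simp
  -- counting Y
  have hgood : Nat.card {a : ↥A // Cnd d (Ψ' a)} = D * mker := by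
    have e : {a : ↥A // Cnd d (Ψ' a)} ≃ {a : Additive ↥A // Cnd d (Ψ a)} :=
      ⟨fun a => ⟨Additive.ofMul a.1, a.2⟩, fun a => ⟨Additive.toMul a.1, a.2⟩,
        fun _ => rfl, fun _ => rfl⟩
    rw [Nat.card_congr e, card_subtype_comp Ψ hΨsurj (Cnd d), hcondcount]
  set n := Nat.card (Q ⧸ A) with hndef
  have hn1 : 1 ≤ n := Nat.card_pos
  have hYcount : Nat.card Y = n * (D * mker) := by
    have e : {q : Q // q ∈ Y} ≃ (Q ⧸ A) × {a : ↥A // Cnd d (Ψ' a)} := by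
      refine ⟨fun q => ⟨π q.1, ⟨α q.1, q.2⟩⟩,
        fun p => ⟨(p.2.1 : Q) * Quotient.out p.1, ?_⟩, ?_, ?_⟩
      · show Cnd d (Ψ' (α ((p.2.1 : Q) * Quotient.out p.1)))
        rw [hαA]
        exact p.2.2
      · intro q
        apply Subtype.ext
        exact hdecomp q.1
      · intro p
        refine Prod.ext ?_ ?_
        · show π ((p.2.1 : Q) * Quotient.out p.1) = p.1
          exact hπA _ _
        · apply Subtype.ext
          show α ((p.2.1 : Q) * Quotient.out p.1) = p.2.1
          exact hαA _ _
    rw [Nat.card_congr e, Nat.card_prod, hgood]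
  refine ⟨Y, ?_, ?_, ?_⟩
  · rw [hYcount]; positivity
  · rw [hYcount]
    have hQ : Nat.card Q = n * m := by
      rw [hndef, hmdef]
      exact Subgroup.card_eq_card_quotient_mul_card_subgroup A
    rw [hQ, hsplit]
    have : 2 * D ≤ d := by omega
    calc 2 * (n * (D * mker)) = n * ((2 * D) * mker) := by ring
      _ ≤ n * (d * mker) := by
          apply Nat.mul_le_mul_left
          apply Nat.mul_le_mul_right
          exact this
  · -- boundary counting
    letI : Fintype Q := Fintype.ofFinite _
    letI : Fintype ↥A := Fintype.ofFinite _
    have hbd : Nat.card {e : Q × S' // Xor' (e.1 ∈ Y) (e.1 * σ e.2 ∈ Y)}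
        = (Finset.univ.filter fun e : Q × S' => Xor' (e.1 ∈ Y) (e.1 * σ e.2 ∈ Y)).card := by
      rw [Nat.card_eq_fintype_card, Fintype.card_subtype]
    have hfiber : (Finset.univ.filter fun e : Q × S' => Xor' (e.1 ∈ Y) (e.1 * σ e.2 ∈ Y)).card
        = ∑ p : (Q ⧸ A) × S',
          ((Finset.univ.filter fun e : Q × S' => Xor' (e.1 ∈ Y) (e.1 * σ e.2 ∈ Y)).filter
            (fun e => (π e.1, e.2) = p)).card := by
      exact Finset.card_eq_sum_card_fiberwise (fun e _ => Finset.mem_univ _)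
    have hYmem : ∀ q : Q, q ∈ Y ↔ Cnd d (Ψ' (α q)) := fun q => Iff.rfl
    have hYmul : ∀ (q : Q) (s : S'), (q * σ s ∈ Y) ↔ Cnd d (Ψ' (α q) + Ψ' (h (π q, s))) := by
      intro q s
      rw [hYmem, hrel q s, hΨ'mul]
    have hperp : ∀ p : (Q ⧸ A) × S',
        ((Finset.univ.filter fun e : Q × S' => Xor' (e.1 ∈ Y) (e.1 * σ e.2 ∈ Y)).filter
            (fun e => (π e.1, e.2) = p)).card
          ≤ (Finset.univ.filter fun a : ↥A =>
              Xor' (Cnd d (Ψ' a)) (Cnd d (Ψ' a + Ψ' (h p)))).card := by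
      intro p
      apply Finset.card_le_card_of_injOn (fun e => α e.1)
      · intro e he
        simp only [Finset.mem_coe, Finset.mem_filter, Finset.mem_univ, true_and] at he ⊢
        obtain ⟨hxor, hfib⟩ := he
        have hj : π e.1 = p.1 := congrArg Prod.fst hfib
        have hs : e.2 = p.2 := congrArg Prod.snd hfib
        have h1 : (e.1 ∈ Y) ↔ Cnd d (Ψ' (α e.1)) := hYmem e.1
        have h2 : (e.1 * σ e.2 ∈ Y) ↔ Cnd d (Ψ' (α e.1) + Ψ' (h p)) := by
          rw [hYmul e.1 e.2, hj, hs]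
        exact (xor_iff_congr h1 h2).mp hxor
      · intro e₁ he₁ e₂ he₂ hα12
        simp only [Finset.mem_coe, Finset.mem_filter, Finset.mem_univ, true_and] at he₁ he₂
        have hj1 : π e₁.1 = p.1 := congrArg Prod.fst he₁.2
        have hj2 : π e₂.1 = p.1 := congrArg Prod.fst he₂.2
        have hs1 : e₁.2 = p.2 := congrArg Prod.snd he₁.2
        have hs2 : e₂.2 = p.2 := congrArg Prod.snd he₂.2
        have : e₁.1 = e₂.1 := by
          rw [← hdecomp e₁.1, ← hdecomp e₂.1, hj1, hj2]
          rw [show α e₁.1 = α e₂.1 from hα12]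
        exact Prod.ext this (hs1.trans hs2.symm)
    have hcnt : ∀ p : (Q ⧸ A) × S',
        K * (Finset.univ.filter fun a : ↥A =>
            Xor' (Cnd d (Ψ' a)) (Cnd d (Ψ' a + Ψ' (h p)))).card ≤ 3 * d * mker := by
      intro p
      obtain ⟨u, hu1, hu2⟩ := hΨh p
      have e : {a : ↥A // Xor' (Cnd d (Ψ' a)) (Cnd d (Ψ' a + Ψ' (h p)))}
          ≃ {a : Additive ↥A // Xor' (Cnd d (Ψ a)) (Cnd d (Ψ a + Ψ' (h p)))} :=
        ⟨fun a => ⟨Additive.ofMul a.1, a.2⟩, fun a => ⟨Additive.toMul a.1, a.2⟩,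
          fun _ => rfl, fun _ => rfl⟩
      have hc1 : (Finset.univ.filter fun a : ↥A =>
            Xor' (Cnd d (Ψ' a)) (Cnd d (Ψ' a + Ψ' (h p)))).card
          = Nat.card {x : ZMod d // Xor' (Cnd d x) (Cnd d (x + Ψ' (h p)))} * mker := by
        rw [← Fintype.card_subtype, ← Nat.card_eq_fintype_card, Nat.card_congr e]
        exact card_subtype_comp Ψ hΨsurj (fun x => Xor' (Cnd d x) (Cnd d (x + Ψ' (h p))))
      rw [hc1]
      have hxc : Nat.card {x : ZMod d // Xor' (Cnd d x) (Cnd d (x + Ψ' (h p)))} ≤ 3 * u.natAbs := by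
        have : Ψ' (h p) = ((u : ℤ) : ZMod d) := hu1
        rw [this]
        exact xor_count_int d hd2 u
      calc K * (Nat.card {x : ZMod d // Xor' (Cnd d x) (Cnd d (x + Ψ' (h p)))} * mker)
          ≤ K * (3 * u.natAbs * mker) := by
            apply Nat.mul_le_mul_left
            exact Nat.mul_le_mul_right _ hxc
        _ = 3 * (K * u.natAbs) * mker := by ring
        _ ≤ 3 * d * mker := by
            apply Nat.mul_le_mul_right
            exact Nat.mul_le_mul_left 3 hu2
    -- put everything together
    have hsum : K * Nat.card {e : Q × S' // Xor' (e.1 ∈ Y) (e.1 * σ e.2 ∈ Y)}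
        ≤ (n * Nat.card S') * (3 * d * mker) := by
      rw [hbd, hfiber, Finset.mul_sum]
      calc ∑ p : (Q ⧸ A) × S', K * ((Finset.univ.filter fun e : Q × S' =>
              Xor' (e.1 ∈ Y) (e.1 * σ e.2 ∈ Y)).filter (fun e => (π e.1, e.2) = p)).card
          ≤ ∑ p : (Q ⧸ A) × S', 3 * d * mker := by
            apply Finset.sum_le_sum
            intro p _
            calc K * _ ≤ K * (Finset.univ.filter fun a : ↥A =>
                  Xor' (Cnd d (Ψ' a)) (Cnd d (Ψ' a + Ψ' (h p)))).card :=
                  Nat.mul_le_mul_left K (hperp p)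
              _ ≤ 3 * d * mker := hcnt p
        _ = (n * Nat.card S') * (3 * d * mker) := by
            rw [Finset.sum_const, Finset.card_univ, Fintype.card_prod]
            rw [← Nat.card_eq_fintype_card, ← Nat.card_eq_fintype_card, ← hndef]
            simp [smul_eq_mul]
    calc K * Nat.card {e : Q × S' // Xor' (e.1 ∈ Y) (e.1 * σ e.2 ∈ Y)}
        ≤ (n * Nat.card S') * (3 * d * mker) := hsum
      _ ≤ 9 * Nat.card S' * Nat.card Y := by
          rw [hYcount]
          have hd3D : d ≤ 3 * D := by omega
          calc (n * Nat.card S') * (3 * d * mker)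
              ≤ (n * Nat.card S') * (3 * (3 * D) * mker) := by
                apply Nat.mul_le_mul_left
                apply Nat.mul_le_mul_right
                exact Nat.mul_le_mul_left 3 hd3D
            _ = 9 * Nat.card S' * (n * (D * mker)) := by ring

end LWaux


/-- A (multi)graph: a type of vertices, a type of edges, and an endpoint map
(an edge with endpoints `(a, b)` joins `a` to `b`; edges are counted with
multiplicity). -/
structure MultiGraph where
  V : Type*
  E : Type*
  ends : E → V × V

/-- `|∂A|`: the number of edges with exactly one endpoint in `A`. -/
noncomputable def MultiGraph.bdry (X : MultiGraph) (A : Set X.V) : ℕ :=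
  Nat.card {e : X.E // Xor' ((X.ends e).1 ∈ A) ((X.ends e).2 ∈ A)}

/-- The Cheeger constant `h(X)` of a finite graph `X`: the minimum of `|∂A|/|A|` over
all sets `A` of vertices with `0 < |A| ≤ |V(X)|/2`. -/
noncomputable def MultiGraph.cheeger (X : MultiGraph) : ℝ :=
  sInf {r | ∃ A : Set X.V, 0 < Nat.card A ∧ 2 * Nat.card A ≤ Nat.card X.V ∧
    r = (X.bdry A : ℝ) / (Nat.card A : ℝ)}

/-- The Cayley graph `X(G/N; S)` of the quotient of `G` by a normal subgroup `N`, with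
respect to a finite generating set `S` of `G`: the vertex set is the quotient group
`G/N`, and for each vertex `v` and each `s ∈ S` there is one edge joining `v` to `v·s`
(edges counted with multiplicity, one for each pair `(v, s)`). -/
noncomputable def cayleyQuot (G : Type*) [Group G] (S : Finset G) (N : Subgroup G)
    (hN : N.Normal) : MultiGraph :=
  letI := hN
  { V := G ⧸ N
    E := (G ⧸ N) × {s // s ∈ S}
    ends := fun p => (p.1, p.1 * (QuotientGroup.mk (p.2 : G) : G ⧸ N)) }

open scoped commutatorElement

/-- **Theorem 3.1 (Lubotzky–Weiss).** Suppose a finitely generated group `G` (with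
finite generating set `S`) has Property `(τ)` with respect to a collection `𝒞` of
finite index normal subgroups, i.e. the Cheeger constants of the Cayley graphs
`X(G/N; S)`, `N ∈ 𝒞`, are bounded away from zero.  Then there is a constant `c > 1`
such that whenever `J ∈ 𝒞` is contained in a normal subgroup `H` of `G` with `H/J`
abelian, we have `|H/J| < c^[G:H]`. -/
theorem stmt4 (G : Type*) [Group G] (S : Finset G)
    (hS : Subgroup.closure (S : Set G) = ⊤)
    (C : Set (Subgroup G))
    (hCn : ∀ N ∈ C, N.Normal) (hCfi : ∀ N ∈ C, N.FiniteIndex)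
    (htau : ∃ ε : ℝ, 0 < ε ∧ ∀ N, ∀ hN : N ∈ C,
      ε ≤ (cayleyQuot G S N (hCn N hN)).cheeger) :
    ∃ c : ℝ, 1 < c ∧ ∀ J ∈ C, ∀ H : Subgroup G, H.Normal → J ≤ H →
      (∀ a ∈ H, ∀ b ∈ H, ⁅a, b⁆ ∈ J) →
      ((J.relIndex H : ℝ) < c ^ H.index) := by
  classical
  obtain ⟨ε, hε, htau⟩ := htau
  set s := S.card with hsdef
  set K := Nat.ceil ((9 * s + 1 : ℝ) / ε) with hKdef
  have hK1 : 1 ≤ K := by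
    rw [hKdef]
    have h0 : (0:ℝ) < (9 * s + 1 : ℝ) / ε := by positivity
    have := Nat.ceil_pos.mpr h0
    omega
  have hKs1 : (1:ℝ) ≤ (K : ℝ) ^ s := one_le_pow₀ (by exact_mod_cast hK1)
  refine ⟨(K : ℝ) ^ s + 1, by linarith, ?_⟩
  intro J hJ H hHn hJH hcommJ
  by_contra hcon
  push_neg at hcon
  haveI hJn := hCn J hJ
  haveI := hCfi J hJ
  have hYall := htau J hJ
  set Q := G ⧸ J with hQdef
  set A' : Subgroup Q := H.map (QuotientGroup.mk' J) with hA'def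
  haveI hA'n : A'.Normal :=
    Subgroup.Normal.map hHn (QuotientGroup.mk' J) (QuotientGroup.mk'_surjective J)
  have hcomm : ∀ x y : ↥A', x * y = y * x := by
    rintro ⟨x, hx⟩ ⟨y, hy⟩
    obtain ⟨a, ha, rfl⟩ := Subgroup.mem_map.mp hx
    obtain ⟨b, hb, rfl⟩ := Subgroup.mem_map.mp hy
    apply Subtype.ext
    show (QuotientGroup.mk' J) a * (QuotientGroup.mk' J) b
      = (QuotientGroup.mk' J) b * (QuotientGroup.mk' J) a
    rw [← map_mul, ← map_mul]
    show (QuotientGroup.mk (a * b) : Q) = QuotientGroup.mk (b * a)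
    rw [QuotientGroup.eq]
    have heq : (a * b)⁻¹ * (b * a) = ⁅b⁻¹, a⁻¹⁆ := by
      show (a * b)⁻¹ * (b * a) = b⁻¹ * a⁻¹ * b⁻¹⁻¹ * a⁻¹⁻¹
      group
    rw [heq]
    exact hcommJ b⁻¹ (inv_mem hb) a⁻¹ (inv_mem ha)
  -- identifications of cardinalities
  have hn : Nat.card (Q ⧸ A') = H.index := by
    rw [Nat.card_congr (QuotientGroup.quotientQuotientEquivQuotient J H hJH).toEquiv]
    exact (Subgroup.index_eq_card H).symm
  have hm : Nat.card ↥A' = J.relIndex H := by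
    set φ := (QuotientGroup.mk' J).comp H.subtype with hφdef
    have hker : φ.ker = J.subgroupOf H := by
      ext x
      show (QuotientGroup.mk (x : G) : Q) = 1 ↔ x ∈ J.subgroupOf H
      rw [QuotientGroup.eq_one_iff, Subgroup.mem_subgroupOf]
    have hrange : φ.range = A' := by
      ext y
      constructor
      · rintro ⟨x, rfl⟩
        exact Subgroup.mem_map.mpr ⟨x, x.2, rfl⟩
      · rintro hy
        obtain ⟨a, ha, rfl⟩ := Subgroup.mem_map.mp hy
        exact ⟨⟨a, ha⟩, rfl⟩
    have h1 := Nat.card_congr (QuotientGroup.quotientKerEquivRange φ).toEquiv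
    rw [hker, hrange] at h1
    rw [← h1]
    show Nat.card (↥H ⧸ J.subgroupOf H) = J.relIndex H
    exact (Subgroup.index_eq_card (J.subgroupOf H)).symm
  have hSs : Nat.card {x // x ∈ S} = s := by
    rw [Nat.card_eq_fintype_card]
    exact Fintype.card_coe S
  have hidx : H.index ≠ 0 := by
    intro h0
    have hdvd := Subgroup.index_dvd_of_le hJH
    rw [h0] at hdvd
    exact Subgroup.FiniteIndex.index_ne_zero (zero_dvd_iff.mp hdvd)
  have hbig : K ^ (Nat.card (Q ⧸ A') * Nat.card {x // x ∈ S}) < Nat.card ↥A' := by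
    rw [hn, hSs, hm]
    have h1 : ((K:ℝ) ^ s) ^ H.index < ((K:ℝ) ^ s + 1) ^ H.index := by
      apply pow_lt_pow_left₀ (by linarith) (by positivity) hidx
    have h2 : ((K:ℝ) ^ s) ^ H.index = (K:ℝ) ^ (H.index * s) := by
      rw [pow_mul]
      ring
    have h3 : ((K:ℝ)) ^ (H.index * s) < (J.relIndex H : ℝ) := by
      rw [← h2]
      exact lt_of_lt_of_le h1 hcon
    exact_mod_cast h3
  obtain ⟨Y, hY1, hY2, hY3⟩ := LWaux.core
    (fun t : {x // x ∈ S} => (QuotientGroup.mk (t : G) : Q)) A' hcomm K (by omega) hbig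
  set X := cayleyQuot G S J (hCn J hJ) with hXdef
  have hbdry : X.bdry Y
      = Nat.card {e : Q × {x // x ∈ S} //
          Xor' (e.1 ∈ Y) (e.1 * (QuotientGroup.mk (e.2 : G) : Q) ∈ Y)} := rfl
  have hmem : (X.bdry Y : ℝ) / (Nat.card Y : ℝ) ∈
      {r | ∃ A : Set X.V, 0 < Nat.card A ∧ 2 * Nat.card A ≤ Nat.card X.V ∧
        r = (X.bdry A : ℝ) / (Nat.card A : ℝ)} := ⟨Y, hY1, hY2, rfl⟩
  have hbdd : BddBelow {r | ∃ A : Set X.V, 0 < Nat.card A ∧ 2 * Nat.card A ≤ Nat.card X.V ∧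
      r = (X.bdry A : ℝ) / (Nat.card A : ℝ)} := by
    refine ⟨0, ?_⟩
    rintro r ⟨B, hB1, hB2, rfl⟩
    positivity
  have hr : X.cheeger ≤ (X.bdry Y : ℝ) / (Nat.card Y : ℝ) := csInf_le hbdd hmem
  have hfin : (X.bdry Y : ℝ) / (Nat.card Y : ℝ) < ε := by
    rw [hbdry]
    have hY3' : (K : ℝ) * Nat.card {e : Q × {x // x ∈ S} //
        Xor' (e.1 ∈ Y) (e.1 * (QuotientGroup.mk (e.2 : G) : Q) ∈ Y)}
        ≤ 9 * s * Nat.card Y := by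
      rw [← hSs]
      exact_mod_cast hY3
    have hKpos : (0:ℝ) < K := by exact_mod_cast hK1
    have hYpos : (0:ℝ) < Nat.card Y := by exact_mod_cast hY1
    have hcl : (9 * s + 1 : ℝ) ≤ ε * K := by
      have h4 : ((9 * s + 1 : ℝ) / ε) ≤ (K : ℝ) := Nat.le_ceil _
      calc (9 * s + 1 : ℝ) = ((9 * s + 1 : ℝ) / ε) * ε := by field_simp
        _ ≤ K * ε := by
            apply mul_le_mul_of_nonneg_right h4 (le_of_lt hε)
        _ = ε * K := by ring
    rw [div_lt_iff₀ hYpos]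
    set bY : ℝ := (Nat.card {e : Q × {x // x ∈ S} //
        Xor' (e.1 ∈ Y) (e.1 * (QuotientGroup.mk (e.2 : G) : Q) ∈ Y)} : ℝ) with hbYdef
    have h5 : (9 * (s:ℝ)) * (Nat.card Y) < ε * K * (Nat.card Y) := by
      have h51 : (9:ℝ) * s < ε * K := by linarith
      exact mul_lt_mul_of_pos_right h51 hYpos
    have h6 : (K:ℝ) * bY < K * (ε * (Nat.card Y)) := by
      calc (K:ℝ) * bY ≤ 9 * s * (Nat.card Y) := hY3'
        _ < ε * K * (Nat.card Y) := h5
        _ = K * (ε * (Nat.card Y)) := by ring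
    exact lt_of_mul_lt_mul_left h6 (le_of_lt hKpos)
  linarith
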